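/- (Prompt-shift risk gap.) Let 𝓓, Q_g, Q_b be probability measures on ℝ^d, let f_T : ℝ^d → ℝ^m and φ̃ : ℝ^d → ℝ^r be measurable with ‖f_T(x)‖ ≤ M_T and ‖φ̃(x)‖ ≤ M_φ holding almost everywhere under each of 𝓓, Q_g and Q_b. Let η > 0 and define the one-step distilled weights W_g := 2η 𝔼_{x∼Q_g}[ f_T(x) φ̃(x)ᵀ ] and W_b := 2η 𝔼_{x∼Q_b}[ f_T(x) φ̃(x)ᵀ ], and the target-domain distillation risk L_𝓓(W) = 𝔼_{x∼𝓓}[ ‖W φ̃(x) − f_T(x)‖² ]. Suppose δ ≥ 0 satisfies ‖𝔼_{x∼Q_b}[ f_T(x) φ̃(x)ᵀ ] − 𝔼_{x∼Q_g}[ f_T(x) φ̃(x)ᵀ ]‖_F ≤ M_T M_φ δ. Then L_𝓓(W_b) − L_𝓓(W_g) ≤ 4 η² M_T² M_φ⁴ δ² + 4 η M_T² M_φ² (1 + 2η M_φ²) δ. -/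

import Mathlib

open scoped BigOperators
open MeasureTheory

/-- The output `W v` of an `m × r` weight matrix on a feature vector `v ∈ ℝ^r`. -/
noncomputable def matApply {m r : ℕ} (W : Matrix (Fin m) (Fin r) ℝ)
    (v : EuclideanSpace ℝ (Fin r)) : EuclideanSpace ℝ (Fin m) :=
  WithLp.toLp 2 (fun a => ∑ s, W a s * v s)

/-- The Frobenius norm of a real matrix. -/
noncomputable def frobNorm {m r : ℕ} (A : Matrix (Fin m) (Fin r) ℝ) : ℝ :=
  Real.sqrt (∑ a, ∑ s, (A a s) ^ 2)

lemma frobNorm_nonneg {m r : ℕ} (A : Matrix (Fin m) (Fin r) ℝ) : 0 ≤ frobNorm A :=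
  Real.sqrt_nonneg _

lemma frobNorm_sq {m r : ℕ} (A : Matrix (Fin m) (Fin r) ℝ) :
    frobNorm A ^ 2 = ∑ a, ∑ s, (A a s) ^ 2 :=
  Real.sq_sqrt (by positivity)

lemma euclid_norm_sq {n : ℕ} (v : EuclideanSpace ℝ (Fin n)) :
    ‖v‖ ^ 2 = ∑ i, (v i) ^ 2 := by
  rw [EuclideanSpace.norm_eq, Real.sq_sqrt (by positivity)]
  simp [sq_abs]

lemma coord_le_norm {n : ℕ} (v : EuclideanSpace ℝ (Fin n)) (i : Fin n) : |v i| ≤ ‖v‖ := by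
  have h := euclid_norm_sq v
  have h2 : (v i) ^ 2 ≤ ∑ j, (v j) ^ 2 :=
    Finset.single_le_sum (f := fun j => (v j) ^ 2) (fun j _ => sq_nonneg _) (Finset.mem_univ i)
  nlinarith [norm_nonneg v, abs_nonneg (v i), sq_abs (v i)]

lemma matApply_norm_le {m r : ℕ} (A : Matrix (Fin m) (Fin r) ℝ)
    (v : EuclideanSpace ℝ (Fin r)) : ‖matApply A v‖ ≤ frobNorm A * ‖v‖ := by
  have h1 : ‖matApply A v‖ ^ 2 ≤ frobNorm A ^ 2 * ‖v‖ ^ 2 := by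
    rw [euclid_norm_sq, frobNorm_sq, euclid_norm_sq, Finset.sum_mul]
    refine Finset.sum_le_sum fun a _ => ?_
    simpa [matApply] using Finset.sum_mul_sq_le_sq_mul_sq Finset.univ (fun s => A a s) (fun s => v s)
  nlinarith [norm_nonneg (matApply A v), mul_nonneg (frobNorm_nonneg A) (norm_nonneg v)]

lemma matApply_sub {m r : ℕ} (W W' : Matrix (Fin m) (Fin r) ℝ)
    (v : EuclideanSpace ℝ (Fin r)) :
    matApply (W - W') v = matApply W v - matApply W' v := by
  ext a
  simp only [matApply, PiLp.toLp_apply, PiLp.sub_apply, Matrix.sub_apply, sub_mul]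
  exact Finset.sum_sub_distrib ..

lemma frobNorm_smul {m r : ℕ} {c : ℝ} (hc : 0 ≤ c) (A : Matrix (Fin m) (Fin r) ℝ) :
    frobNorm (c • A) = c * frobNorm A := by
  unfold frobNorm
  have h : (∑ a, ∑ s, ((c • A) a s) ^ 2) = c ^ 2 * ∑ a, ∑ s, (A a s) ^ 2 := by
    rw [Finset.mul_sum]
    refine Finset.sum_congr rfl fun a _ => ?_
    rw [Finset.mul_sum]
    refine Finset.sum_congr rfl fun s _ => ?_
    simp [Matrix.smul_apply, smul_eq_mul, mul_pow]
  rw [h, Real.sqrt_mul (sq_nonneg c), Real.sqrt_sq hc]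

lemma frob_exp_le {d m r : ℕ} (Q : Measure (EuclideanSpace ℝ (Fin d)))
    [IsProbabilityMeasure Q]
    (fT : EuclideanSpace ℝ (Fin d) → EuclideanSpace ℝ (Fin m)) (hfT : Measurable fT)
    (φt : EuclideanSpace ℝ (Fin d) → EuclideanSpace ℝ (Fin r)) (hφt : Measurable φt)
    (MT Mφ : ℝ) (hMT : ∀ᵐ x ∂Q, ‖fT x‖ ≤ MT) (hMφ : ∀ᵐ x ∂Q, ‖φt x‖ ≤ Mφ)
    (A : Matrix (Fin m) (Fin r) ℝ) (hA : ∀ a s, A a s = ∫ x, fT x a * φt x s ∂Q) :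
    frobNorm A ≤ MT * Mφ := by
  obtain ⟨x₀, hx1, hx2⟩ := (hMT.and hMφ).exists
  have hMT0 : 0 ≤ MT := le_trans (norm_nonneg _) hx1
  have hMφ0 : 0 ≤ Mφ := le_trans (norm_nonneg _) hx2
  have hint : ∀ (a : Fin m) (s : Fin r), Integrable (fun x => fT x a * φt x s) Q := by
    intro a s
    refine Integrable.mono' (integrable_const (MT * Mφ)) ?_ ?_
    · exact (((measurable_pi_apply a).comp ((WithLp.measurable_ofLp _ _).comp hfT)).mul
        ((measurable_pi_apply s).comp ((WithLp.measurable_ofLp _ _).comp hφt))).aestronglyMeasurable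
    · filter_upwards [hMT, hMφ] with x h1 h2
      have ha : |fT x a| ≤ ‖fT x‖ := coord_le_norm _ _
      have hs : |φt x s| ≤ ‖φt x‖ := coord_le_norm _ _
      calc ‖fT x a * φt x s‖ = |fT x a| * |φt x s| := by rw [Real.norm_eq_abs, abs_mul]
        _ ≤ MT * Mφ := by
            apply mul_le_mul (ha.trans h1) (hs.trans h2) (abs_nonneg _) hMT0
  have hint2 : ∀ (a : Fin m) (s : Fin r),
      Integrable (fun x => A a s * (fT x a * φt x s)) Q :=
    fun a s => (hint a s).const_mul _
  have key : frobNorm A ^ 2 ≤ frobNorm A * (MT * Mφ) := by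
    rw [frobNorm_sq]
    have h2 : (∑ a, ∑ s, A a s ^ 2)
        = ∫ x, (∑ a, ∑ s, A a s * (fT x a * φt x s)) ∂Q := by
      rw [integral_finset_sum _ (fun a _ => integrable_finset_sum _ (fun s _ => hint2 a s))]
      refine Finset.sum_congr rfl fun a _ => ?_
      rw [integral_finset_sum _ (fun s _ => hint2 a s)]
      refine Finset.sum_congr rfl fun s _ => ?_
      rw [integral_const_mul, ← hA a s]; ring
    rw [h2]
    have hptw : ∀ᵐ x ∂Q,
        (∑ a, ∑ s, A a s * (fT x a * φt x s)) ≤ frobNorm A * (MT * Mφ) := by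
      filter_upwards [hMT, hMφ] with x h1 h2
      have hre : (∑ a, ∑ s, A a s * (fT x a * φt x s))
          = ∑ a, fT x a * (matApply A (φt x) a) := by
        refine Finset.sum_congr rfl fun a _ => ?_
        simp only [matApply, PiLp.toLp_apply, Finset.mul_sum]
        refine Finset.sum_congr rfl fun s _ => ?_
        ring
      rw [hre]
      have hinner : (∑ a, fT x a * (matApply A (φt x) a))
          ≤ ‖fT x‖ * ‖matApply A (φt x)‖ := by
        have := real_inner_le_norm (fT x) (matApply A (φt x))
        simpa [PiLp.inner_apply, RCLike.inner_apply, mul_comm] using this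
      refine hinner.trans ?_
      have hm := matApply_norm_le A (φt x)
      calc ‖fT x‖ * ‖matApply A (φt x)‖
          ≤ MT * (frobNorm A * Mφ) := by
            apply mul_le_mul h1 (hm.trans ?_) (norm_nonneg _) hMT0
            exact mul_le_mul_of_nonneg_left h2 (frobNorm_nonneg A)
        _ = frobNorm A * (MT * Mφ) := by ring
    have hg : Integrable (fun x => ∑ a, ∑ s, A a s * (fT x a * φt x s)) Q :=
      integrable_finset_sum _ (fun a _ => integrable_finset_sum _ (fun s _ => hint2 a s))
    calc (∫ x, (∑ a, ∑ s, A a s * (fT x a * φt x s)) ∂Q)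
        ≤ ∫ _x, frobNorm A * (MT * Mφ) ∂Q := integral_mono_ae hg (integrable_const _) hptw
      _ = frobNorm A * (MT * Mφ) := by simp
  nlinarith [frobNorm_nonneg A, mul_nonneg hMT0 hMφ0]

/-- **Prompt-shift risk gap.**
Let `W_g = 2η 𝔼_{Q_g}[f_T(x) φ̃(x)ᵀ]` and `W_b = 2η 𝔼_{Q_b}[f_T(x) φ̃(x)ᵀ]` be the one-step
distilled weights of a good and a bad prompt distribution, and let
`L_𝓓(W) = 𝔼_𝓓 ‖W φ̃(x) − f_T(x)‖²` be the target-domain distillation risk.  If `δ ≥ 0`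
satisfies `‖𝔼_{Q_b}[f_T φ̃ᵀ] − 𝔼_{Q_g}[f_T φ̃ᵀ]‖_F ≤ M_T M_φ δ`, then
`L_𝓓(W_b) − L_𝓓(W_g) ≤ 4η² M_T² M_φ⁴ δ² + 4η M_T² M_φ² (1 + 2η M_φ²) δ`. -/
theorem prompt_shift_risk_gap (d m r : ℕ)
    (𝓓 Qg Qb : Measure (EuclideanSpace ℝ (Fin d)))
    [IsProbabilityMeasure 𝓓] [IsProbabilityMeasure Qg] [IsProbabilityMeasure Qb]
    (fT : EuclideanSpace ℝ (Fin d) → EuclideanSpace ℝ (Fin m)) (hfT : Measurable fT)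
    (φt : EuclideanSpace ℝ (Fin d) → EuclideanSpace ℝ (Fin r)) (hφt : Measurable φt)
    (MT Mφ : ℝ)
    (hMTD : ∀ᵐ x ∂𝓓, ‖fT x‖ ≤ MT) (hMφD : ∀ᵐ x ∂𝓓, ‖φt x‖ ≤ Mφ)
    (hMTg : ∀ᵐ x ∂Qg, ‖fT x‖ ≤ MT) (hMφg : ∀ᵐ x ∂Qg, ‖φt x‖ ≤ Mφ)
    (hMTb : ∀ᵐ x ∂Qb, ‖fT x‖ ≤ MT) (hMφb : ∀ᵐ x ∂Qb, ‖φt x‖ ≤ Mφ)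
    (η : ℝ) (hη : 0 < η)
    (Ag Ab : Matrix (Fin m) (Fin r) ℝ)
    (hAg : ∀ a s, Ag a s = ∫ x, fT x a * φt x s ∂Qg)
    (hAb : ∀ a s, Ab a s = ∫ x, fT x a * φt x s ∂Qb)
    (Wg Wb : Matrix (Fin m) (Fin r) ℝ)
    (hWg : Wg = (2 * η) • Ag) (hWb : Wb = (2 * η) • Ab)
    (δ : ℝ) (hδ0 : 0 ≤ δ)
    (hδ : frobNorm (Ab - Ag) ≤ MT * Mφ * δ) :
    (∫ x, ‖matApply Wb (φt x) - fT x‖ ^ 2 ∂𝓓) - (∫ x, ‖matApply Wg (φt x) - fT x‖ ^ 2 ∂𝓓)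
      ≤ 4 * η ^ 2 * MT ^ 2 * Mφ ^ 4 * δ ^ 2
        + 4 * η * MT ^ 2 * Mφ ^ 2 * (1 + 2 * η * Mφ ^ 2) * δ := by
  obtain ⟨x₀, hx1, hx2⟩ := (hMTD.and hMφD).exists
  have hMT0 : 0 ≤ MT := le_trans (norm_nonneg _) hx1
  have hMφ0 : 0 ≤ Mφ := le_trans (norm_nonneg _) hx2
  have hη2 : (0:ℝ) ≤ 2 * η := by linarith
  -- Frobenius bounds
  have hFg : frobNorm Ag ≤ MT * Mφ := frob_exp_le Qg fT hfT φt hφt MT Mφ hMTg hMφg Ag hAg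
  have hWgF : frobNorm Wg ≤ 2 * η * (MT * Mφ) := by
    rw [hWg, frobNorm_smul hη2]
    exact mul_le_mul_of_nonneg_left hFg hη2
  have hΔF : frobNorm (Wb - Wg) ≤ 2 * η * (MT * Mφ * δ) := by
    have : Wb - Wg = (2 * η) • (Ab - Ag) := by rw [hWg, hWb, smul_sub]
    rw [this, frobNorm_smul hη2]
    exact mul_le_mul_of_nonneg_left hδ hη2
  -- measurability of integrands
  have hmeas : ∀ W : Matrix (Fin m) (Fin r) ℝ,
      Measurable (fun x => ‖matApply W (φt x) - fT x‖ ^ 2) := by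
    intro W
    have h1 : Measurable (fun x => matApply W (φt x) - fT x) := by
      refine Measurable.sub ?_ hfT
      refine (WithLp.measurable_toLp _ _).comp (measurable_pi_lambda _ (fun a => ?_))
      exact Finset.measurable_sum _
        (fun s _ => ((measurable_pi_apply s).comp ((WithLp.measurable_ofLp _ _).comp hφt)).const_mul (W a s))
    exact h1.norm.pow_const 2
  -- integrability of integrands
  have hintg : ∀ W : Matrix (Fin m) (Fin r) ℝ,
      Integrable (fun x => ‖matApply W (φt x) - fT x‖ ^ 2) 𝓓 := by
    intro W
    refine Integrable.mono' (integrable_const ((frobNorm W * Mφ + MT) ^ 2))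
      (hmeas W).aestronglyMeasurable ?_
    filter_upwards [hMTD, hMφD] with x h1 h2
    have hb : ‖matApply W (φt x) - fT x‖ ≤ frobNorm W * Mφ + MT := by
      calc ‖matApply W (φt x) - fT x‖ ≤ ‖matApply W (φt x)‖ + ‖fT x‖ := norm_sub_le _ _
        _ ≤ frobNorm W * Mφ + MT := by
            refine add_le_add ((matApply_norm_le W (φt x)).trans ?_) h1
            exact mul_le_mul_of_nonneg_left h2 (frobNorm_nonneg W)
    rw [Real.norm_eq_abs, abs_of_nonneg (sq_nonneg _)]
    exact pow_le_pow_left₀ (norm_nonneg _) hb 2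
  -- pointwise bound on the difference
  set K := 4 * η ^ 2 * MT ^ 2 * Mφ ^ 4 * δ ^ 2
        + 4 * η * MT ^ 2 * Mφ ^ 2 * (1 + 2 * η * Mφ ^ 2) * δ with hK
  have hK0 : K = (2 * η * (MT * Mφ * δ) * Mφ) ^ 2
      + 2 * (2 * η * (MT * Mφ * δ) * Mφ) * (2 * η * (MT * Mφ) * Mφ + MT) := by
    rw [hK]; ring
  have hptw : ∀ᵐ x ∂𝓓,
      ‖matApply Wb (φt x) - fT x‖ ^ 2 - ‖matApply Wg (φt x) - fT x‖ ^ 2 ≤ K := by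
    filter_upwards [hMTD, hMφD] with x h1 h2
    set u := matApply (Wb - Wg) (φt x) with hu
    set v := matApply Wg (φt x) - fT x with hv
    have huv : matApply Wb (φt x) - fT x = u + v := by
      rw [hu, hv, matApply_sub]; abel
    have hexp : ‖u + v‖ ^ 2 = ‖u‖ ^ 2 + 2 * (inner ℝ u v : ℝ) + ‖v‖ ^ 2 :=
      norm_add_sq_real u v
    have hinner : (inner ℝ u v : ℝ) ≤ ‖u‖ * ‖v‖ := real_inner_le_norm u v
    have hun : ‖u‖ ≤ 2 * η * (MT * Mφ * δ) * Mφ := by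
      refine (matApply_norm_le _ _).trans ?_
      have := mul_le_mul hΔF h2 (norm_nonneg _) (by positivity)
      linarith
    have hvn : ‖v‖ ≤ 2 * η * (MT * Mφ) * Mφ + MT := by
      rw [hv]
      calc ‖matApply Wg (φt x) - fT x‖ ≤ ‖matApply Wg (φt x)‖ + ‖fT x‖ := norm_sub_le _ _
        _ ≤ 2 * η * (MT * Mφ) * Mφ + MT := by
            refine add_le_add ((matApply_norm_le _ _).trans ?_) h1
            calc frobNorm Wg * ‖φt x‖ ≤ (2 * η * (MT * Mφ)) * Mφ :=
              mul_le_mul hWgF h2 (norm_nonneg _) (by positivity)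
              _ = 2 * η * (MT * Mφ) * Mφ := rfl
    rw [huv, hexp, hK0]
    have hu0 : 0 ≤ ‖u‖ := norm_nonneg u
    have hv0 : 0 ≤ ‖v‖ := norm_nonneg v
    have hA0 : (0:ℝ) ≤ 2 * η * (MT * Mφ * δ) * Mφ := by positivity
    have hB0 : (0:ℝ) ≤ 2 * η * (MT * Mφ) * Mφ + MT := by positivity
    have h3 : ‖u‖ ^ 2 ≤ (2 * η * (MT * Mφ * δ) * Mφ) ^ 2 := pow_le_pow_left₀ hu0 hun 2
    have h4 : ‖u‖ * ‖v‖ ≤ (2 * η * (MT * Mφ * δ) * Mφ) * (2 * η * (MT * Mφ) * Mφ + MT) :=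
      mul_le_mul hun hvn hv0 hA0
    linarith
  -- conclude
  have hsub : (∫ x, ‖matApply Wb (φt x) - fT x‖ ^ 2 ∂𝓓)
      - (∫ x, ‖matApply Wg (φt x) - fT x‖ ^ 2 ∂𝓓)
      = ∫ x, (‖matApply Wb (φt x) - fT x‖ ^ 2 - ‖matApply Wg (φt x) - fT x‖ ^ 2) ∂𝓓 :=
    (integral_sub (hintg Wb) (hintg Wg)).symm
  rw [hsub]
  calc (∫ x, (‖matApply Wb (φt x) - fT x‖ ^ 2 - ‖matApply Wg (φt x) - fT x‖ ^ 2) ∂𝓓)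
      ≤ ∫ _x, K ∂𝓓 := integral_mono_ae ((hintg Wb).sub (hintg Wg)) (integrable_const K) hptw
    _ = K := by simp
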